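/- Let p be an odd prime and P an (almost) extra-special p-group with center Z, and suppose Y₀, Y are subgroups of P intersecting Z trivially, with Y of maximal order among such subgroups. Then there exists x ∈ P such that Y₀ ∩ Y·Z ≤ Y^x; in particular, if Y₀ also has maximal order, then Y₀ and Y are 'linked', i.e., there exist x, y ∈ P with Y₀^x ∩ YZ ≤ Y and Y^y ∩ Y₀Z ≤ Y₀. -/

import Mathlib

open Subgroup
open scoped Pointwise
open scoped commutatorElement

/-- In a finite `p`-group, a normal subgroup of order `p` is central. -/
lemma aux_central {p : ℕ} {P : Type*} [Group P] [Finite P] (hp : p.Prime)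
    (hP : IsPGroup p P) (N : Subgroup P) [N.Normal] (hN : Nat.card N = p) :
    N ≤ Subgroup.center P := by
  haveI : Fact p.Prime := ⟨hp⟩
  have hPc : IsPGroup p (ConjAct P) := hP.of_equiv ConjAct.toConjAct
  have h1 : (1 : ↥N) ∈ MulAction.fixedPoints (ConjAct P) ↥N := by
    intro g
    apply Subtype.ext
    rw [ConjAct.Subgroup.val_conj_smul]
    simp [ConjAct.smul_def]
  obtain ⟨b, hb, hb1⟩ :=
    hPc.exists_fixed_point_of_prime_dvd_card_of_fixed_point ↥N (by rw [hN]) h1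
  have hbc : (b : P) ∈ Subgroup.center P := by
    rw [Subgroup.mem_center_iff]
    intro g
    have h2 := hb (ConjAct.toConjAct g)
    have h3 := congrArg Subtype.val h2
    rw [ConjAct.Subgroup.val_conj_smul] at h3
    rw [ConjAct.smul_def] at h3
    simp only [ConjAct.ofConjAct_toConjAct] at h3
    calc g * ↑b = (g * ↑b * g⁻¹) * g := by group
    _ = ↑b * g := by rw [h3]
  have hbne : (b : P) ≠ 1 := by
    intro h
    exact hb1 (Subtype.ext h.symm)
  have hord : orderOf (b : P) = p := by
    have hdvd : orderOf b ∣ p := by rw [← hN]; exact orderOf_dvd_natCard b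
    rw [← Subgroup.orderOf_coe] at hdvd
    rcases (Nat.Prime.eq_one_or_self_of_dvd hp _ hdvd) with h | h
    · exact absurd (orderOf_eq_one_iff.mp h) hbne
    · exact h
  have hzN : Subgroup.zpowers (b : P) = N := by
    apply Subgroup.eq_of_le_of_card_ge (Subgroup.zpowers_le.mpr b.2)
    rw [hN, Nat.card_zpowers, hord]
  rw [← hzN]
  exact Subgroup.zpowers_le.mpr hbc

/-- In a finite `p`-group, `p`-th powers lie in the Frattini subgroup. -/
lemma aux_pow {p : ℕ} {P : Type*} [Group P] [Finite P] (hp : p.Prime)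
    (hP : IsPGroup p P) (g : P) : g ^ p ∈ frattini P := by
  haveI : Fact p.Prime := ⟨hp⟩
  haveI : Group.IsNilpotent P := hP.isNilpotent
  have hnc : NormalizerCondition P := normalizerCondition_of_isNilpotent
  have key : ∀ M : Subgroup P, IsCoatom M → g ^ p ∈ M := by
    intro M hM
    haveI : M.Normal := Subgroup.NormalizerCondition.normal_of_coatom M hnc hM
    have hq : ∀ q : P ⧸ M, q ^ p = 1 := by
      intro q
      set S := Subgroup.zpowers (q ^ p) with hS
      have hle : M ≤ Subgroup.comap (QuotientGroup.mk' M) S :=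
        le_trans (le_of_eq (QuotientGroup.ker_mk' M).symm) (Subgroup.ker_le_comap _ _)
      rcases hle.lt_or_eq with hlt | heq
      · -- comap = ⊤, so S = ⊤
        have htop : Subgroup.comap (QuotientGroup.mk' M) S = ⊤ := hM.2 _ hlt
        have hStop : S = ⊤ := by
          have := Subgroup.map_comap_eq_self_of_surjective
            (QuotientGroup.mk'_surjective M) S
          rw [htop] at this
          rw [← this]
          exact (Subgroup.map_top_of_surjective _ (QuotientGroup.mk'_surjective M))
        by_contra hq1
        have hqne : q ≠ 1 := by
          intro h; rw [h] at hq1; simp at hq1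
        have hqS : q ∈ S := by rw [hStop]; exact Subgroup.mem_top q
        obtain ⟨m, hm⟩ := Subgroup.mem_zpowers_iff.mp hqS
        -- q ^ ((p : ℤ) * m - 1) = 1
        have hz : q ^ ((p : ℤ) * m - 1) = 1 := by
          have : (q ^ p) ^ m = q := hm
          rw [← zpow_natCast q p] at this
          rw [← zpow_mul] at this
          rw [zpow_sub, this]
          simp
        have hdvd : ((orderOf q : ℤ)) ∣ ((p : ℤ) * m - 1) :=
          orderOf_dvd_iff_zpow_eq_one.mpr hz
        obtain ⟨k, hk⟩ := (hP.to_quotient M) q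
        obtain ⟨i, _, hi⟩ := (Nat.dvd_prime_pow hp).mp (orderOf_dvd_of_pow_eq_one hk)
        have hipos : i ≠ 0 := by
          intro h
          rw [h, pow_zero] at hi
          exact hqne (orderOf_eq_one_iff.mp hi)
        have hpord : (p : ℤ) ∣ (orderOf q : ℤ) := by
          rw [hi]
          exact_mod_cast dvd_pow_self p hipos
        have hp1 : (p : ℤ) ∣ 1 := by
          have h1 : (p : ℤ) ∣ (p : ℤ) * m := Dvd.intro m rfl
          have h2 : (p : ℤ) ∣ (p : ℤ) * m - 1 := hpord.trans hdvd
          have h3 := dvd_sub h1 h2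
          have h4 : (p : ℤ) * m - ((p : ℤ) * m - 1) = 1 := by ring
          rwa [h4] at h3
        have h5 : (p : ℤ) ≤ 1 := Int.le_of_dvd one_pos hp1
        have h6 := hp.two_le
        omega
      · -- comap = M, so S = ⊥
        have hSbot : S = ⊥ := by
          have h1 := Subgroup.map_comap_eq_self_of_surjective
            (QuotientGroup.mk'_surjective M) S
          rw [← heq] at h1
          rw [← h1]
          rw [eq_bot_iff]
          intro y hy
          rw [Subgroup.mem_map] at hy
          obtain ⟨x, hxM, rfl⟩ := hy
          rw [Subgroup.mem_bot]
          exact (QuotientGroup.eq_one_iff x).mpr hxM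
        have : q ^ p ∈ S := Subgroup.mem_zpowers _
        rw [hSbot, Subgroup.mem_bot] at this
        exact this
    have h2 : (QuotientGroup.mk' M) (g ^ p) = 1 := by
      rw [map_pow]
      exact hq _
    have h3 := MonoidHom.mem_ker.mpr h2
    rwa [QuotientGroup.ker_mk'] at h3
  simp only [frattini, Order.radical, Subgroup.mem_iInf]
  exact fun M hM => key M hM

/-- The key surjectivity lemma: if `W` meets the center trivially and the commutator
subgroup is central of order `p`, then every homomorphism `W → commutator P` is of the
form `w ↦ ⁅x, w⁆`. -/
lemma aux_key {p : ℕ} {P : Type*} [Group P] [Finite P] (hp : p.Prime)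
    (hCle : commutator P ≤ Subgroup.center P) (hcard : Nat.card (commutator P) = p) :
    ∀ (W : Subgroup P), W ⊓ Subgroup.center P = ⊥ →
      ∀ f : ↥W →* P, (∀ w, f w ∈ commutator P) →
      ∃ x : P, ∀ w : ↥W, ⁅x, (w : P)⁆ = f w := by
  have hcen : ∀ c ∈ commutator P, ∀ g : P, g * c = c * g := fun c hc =>
    Subgroup.mem_center_iff.mp (hCle hc)
  have hcm : ∀ a y : P, ⁅a, y⁆ ∈ commutator P := fun a y => by
    rw [_root_.commutator_def]
    exact Subgroup.commutator_mem_commutator (Subgroup.mem_top a) (Subgroup.mem_top y)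
  have hmul1 : ∀ a y1 y2 : P, ⁅a, y1 * y2⁆ = ⁅a, y1⁆ * ⁅a, y2⁆ := by
    intro a y1 y2
    have h : ⁅a, y1 * y2⁆ = ⁅a, y1⁆ * (y1 * ⁅a, y2⁆ * y1⁻¹) := by group
    rw [h, hcen _ (hcm a y2) y1]
    group
  have hmul2 : ∀ a b y : P, ⁅a * b, y⁆ = ⁅a, y⁆ * ⁅b, y⁆ := by
    intro a b y
    have h : ⁅a * b, y⁆ = (a * ⁅b, y⁆ * a⁻¹) * ⁅a, y⁆ := by group
    rw [h, hcen _ (hcm b y) a]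
    rw [hcen _ (hcm b y) ⁅a, y⁆]
    group
  -- monoid homs
  let Phi : P → (P →* P) := fun y =>
    { toFun := fun a => ⁅a, y⁆
      map_one' := by simp
      map_mul' := fun a b => hmul2 a b y }
  let Psi : P → (P →* P) := fun a =>
    { toFun := fun y => ⁅a, y⁆
      map_one' := by simp
      map_mul' := fun y1 y2 => hmul1 a y1 y2 }
  suffices H : ∀ n (W : Subgroup P), Nat.card W ≤ n → W ⊓ Subgroup.center P = ⊥ →
      ∀ f : ↥W →* P, (∀ w, f w ∈ commutator P) →
      ∃ x : P, ∀ w : ↥W, ⁅x, (w : P)⁆ = f w by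
    exact fun W => H (Nat.card W) W le_rfl
  intro n
  induction n with
  | zero =>
    intro W hWn
    have : 0 < Nat.card ↥W := Nat.card_pos
    omega
  | succ n ih =>
    intro W hWn hWc f hf
    by_cases hWbot : W = ⊥
    · subst hWbot
      refine ⟨1, fun w => ?_⟩
      have hw1 : w = 1 := by
        apply Subtype.ext
        have := w.2
        rwa [Subgroup.mem_bot] at this
      rw [hw1, map_one]
      simp
    · obtain ⟨y₀, hy₀⟩ := Subgroup.ne_bot_iff_exists_ne_one.mp hWbot
      have hy₀v : (y₀ : P) ≠ 1 := fun h => hy₀ (Subtype.ext h)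
      have hy₀nc : (y₀ : P) ∉ Subgroup.center P := by
        intro h
        have : (y₀ : P) ∈ W ⊓ Subgroup.center P := ⟨y₀.2, h⟩
        rw [hWc, Subgroup.mem_bot] at this
        exact hy₀v this
      rw [Subgroup.mem_center_iff] at hy₀nc
      push_neg at hy₀nc
      obtain ⟨t, ht⟩ := hy₀nc
      set c₀ : P := ⁅t, (y₀ : P)⁆ with hc₀
      have hc₀ne : c₀ ≠ 1 := by
        rw [hc₀, Ne, commutatorElement_eq_one_iff_commute]
        exact ht
      have hc₀mem : c₀ ∈ commutator P := hcm t _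
      have hc₀ord : orderOf c₀ = p := by
        have hdvd : orderOf ((⟨c₀, hc₀mem⟩ : ↥(commutator P)) : P) ∣ p := by
          rw [Subgroup.orderOf_coe, ← hcard]; exact orderOf_dvd_natCard _
        have hdvd' : orderOf c₀ ∣ p := hdvd
        rcases hp.eq_one_or_self_of_dvd _ hdvd' with h | h
        · exact absurd (orderOf_eq_one_iff.mp h) hc₀ne
        · exact h
      have hzp : Subgroup.zpowers c₀ = commutator P := by
        apply Subgroup.eq_of_le_of_card_ge (Subgroup.zpowers_le.mpr hc₀mem)
        rw [hcard, Nat.card_zpowers, hc₀ord]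
      set K : Subgroup P := W ⊓ Subgroup.centralizer {t} with hK
      have hKW : K ≤ W := inf_le_left
      have hy₀K : (y₀ : P) ∉ K := by
        intro h
        have h2 : (y₀ : P) ∈ Subgroup.centralizer {t} := (Subgroup.mem_inf.mp h).2
        rw [Subgroup.mem_centralizer_iff] at h2
        exact ht (h2 t (Set.mem_singleton t))
      have hKlt : K < W := by
        rcases hKW.lt_or_eq with h | h
        · exact h
        · exfalso; apply hy₀K; rw [h]; exact y₀.2
      have hcards : Nat.card ↥K < Nat.card ↥W := by
        have e1 : Nat.card ↥K = (K : Set P).ncard := Nat.card_coe_set_eq _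
        have e2 : Nat.card ↥W = (W : Set P).ncard := Nat.card_coe_set_eq _
        rw [e1, e2]
        exact Set.ncard_lt_ncard (SetLike.coe_ssubset_coe.mpr hKlt) (Set.toFinite _)
      have hKc : K ⊓ Subgroup.center P = ⊥ := by
        rw [eq_bot_iff, ← hWc]
        exact inf_le_inf_right _ hKW
      obtain ⟨x', hx'⟩ := ih K (by omega) hKc (f.comp (Subgroup.inclusion hKW))
        (fun k => hf _)
      -- the correction homomorphism
      let fC : ↥W →* P :=
        { toFun := fun w => f w * ⁅x', (w : P)⁆⁻¹
          map_one' := by simp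
          map_mul' := by
            intro w1 w2
            simp only [map_mul, Subgroup.coe_mul, hmul1, mul_inv_rev]
            calc f w1 * f w2 * (⁅x', (w2 : P)⁆⁻¹ * ⁅x', (w1 : P)⁆⁻¹)
                = f w1 * ((f w2 * ⁅x', (w2 : P)⁆⁻¹) * ⁅x', (w1 : P)⁆⁻¹) := by group
              _ = f w1 * (⁅x', (w1 : P)⁆⁻¹ * (f w2 * ⁅x', (w2 : P)⁆⁻¹)) := by
                  rw [hcen _ (Subgroup.inv_mem _ (hcm x' (w1 : P)))
                    (f w2 * ⁅x', (w2 : P)⁆⁻¹)]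
              _ = f w1 * ⁅x', (w1 : P)⁆⁻¹ * (f w2 * ⁅x', (w2 : P)⁆⁻¹) := by group }
      have hfCmem : ∀ w, fC w ∈ commutator P := fun w =>
        Subgroup.mul_mem _ (hf w) (Subgroup.inv_mem _ (hcm x' _))
      obtain ⟨j, hj⟩ : ∃ j : ℤ, fC y₀ = c₀ ^ j := by
        have := hfCmem y₀
        rw [← hzp] at this
        obtain ⟨k, hk⟩ := Subgroup.mem_zpowers_iff.mp this
        exact ⟨k, hk.symm⟩
      refine ⟨t ^ j * x', fun w => ?_⟩
      obtain ⟨m, hm⟩ : ∃ m : ℤ, ⁅t, (w : P)⁆ = c₀ ^ m := by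
        have := hcm t (w : P)
        rw [← hzp] at this
        obtain ⟨k, hk⟩ := Subgroup.mem_zpowers_iff.mp this
        exact ⟨k, hk.symm⟩
      set k : ↥W := w * y₀ ^ (-m) with hkdef
      have hkcoe : (k : P) = (w : P) * ((y₀ : P)) ^ (-m) := by
        rw [hkdef, Subgroup.coe_mul, SubgroupClass.coe_zpow]
      have hkc : (k : P) ∈ Subgroup.centralizer {t} := by
        rw [Subgroup.mem_centralizer_iff]
        intro h hh
        rw [Set.mem_singleton_iff] at hh
        rw [hh]
        have h1 : ⁅t, (k : P)⁆ = 1 := by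
          rw [hkcoe, hmul1]
          have h2 : ⁅t, ((y₀ : P)) ^ (-m)⁆ = ⁅t, (y₀ : P)⁆ ^ (-m) :=
            map_zpow (Psi t) (y₀ : P) (-m)
          rw [h2, hm, ← hc₀, ← zpow_add]
          simp
        exact (commutatorElement_eq_one_iff_commute.mp h1).eq
      have hkK : (k : P) ∈ K := ⟨k.2, hkc⟩
      have hfk : fC k = 1 := by
        have h3 := hx' ⟨(k : P), hkK⟩
        rw [MonoidHom.comp_apply] at h3
        have h4 : (Subgroup.inclusion hKW ⟨(k : P), hkK⟩) = k := Subtype.ext rfl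
        rw [h4] at h3
        have h3' : ⁅x', (k : P)⁆ = f k := h3
        show f k * ⁅x', (k : P)⁆⁻¹ = 1
        rw [h3']
        simp
      have hw : w = k * y₀ ^ m := by
        rw [hkdef]
        group
      have hfw : fC w = c₀ ^ (j * m) := by
        rw [hw, map_mul, map_zpow, hfk, hj, one_mul, ← zpow_mul]
      have h5 : ⁅t ^ j * x', (w : P)⁆ = ⁅t, (w : P)⁆ ^ j * ⁅x', (w : P)⁆ :=
        calc ⁅t ^ j * x', (w : P)⁆ = (Phi (w : P)) (t ^ j * x') := rfl
          _ = (Phi (w : P)) (t ^ j) * (Phi (w : P)) x' := map_mul _ _ _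
          _ = ((Phi (w : P)) t) ^ j * (Phi (w : P)) x' := by rw [map_zpow]
          _ = ⁅t, (w : P)⁆ ^ j * ⁅x', (w : P)⁆ := rfl
      have h6 : fC w * ⁅x', (w : P)⁆ = f w := by
        show f w * ⁅x', (w : P)⁆⁻¹ * ⁅x', (w : P)⁆ = f w
        group
      rw [h5, hm, ← h6, hfw, ← zpow_mul, mul_comm m j]

/-- Elements of `Y ⊔ Z` are conjugation-stable. -/
lemma aux_conj {p : ℕ} {P : Type*} [Group P] [Finite P]
    (hCle : commutator P ≤ Subgroup.center P) (Y : Subgroup P) :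
    ∀ g a : P, a ∈ Y ⊔ Subgroup.center P → g * a * g⁻¹ ∈ Y ⊔ Subgroup.center P := by
  intro g a ha
  have hset : a ∈ ((Y : Set P) * (Subgroup.center P : Set P)) := by
    rw [← Subgroup.mul_normal]
    exact ha
  obtain ⟨y, hy, z, hz, rfl⟩ := Set.mem_mul.mp hset
  have hz' : g⁻¹ * z = z * g⁻¹ := Subgroup.mem_center_iff.mp hz g⁻¹
  have hcm : ⁅g, y⁆ ∈ commutator P := by
    rw [_root_.commutator_def]
    exact Subgroup.commutator_mem_commutator (Subgroup.mem_top g) (Subgroup.mem_top y)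
  have heq : g * (y * z) * g⁻¹ = ⁅g, y⁆ * y * z := by
    calc g * (y * z) * g⁻¹ = g * y * (z * g⁻¹) := by group
    _ = g * y * (g⁻¹ * z) := by rw [hz']
    _ = ⁅g, y⁆ * y * z := by group
  rw [heq]
  exact Subgroup.mul_mem _ (Subgroup.mul_mem _
    (Subgroup.mem_sup_right (hCle hcm)) (Subgroup.mem_sup_left hy))
    (Subgroup.mem_sup_right hz)

/-- Main conjugation lemma. -/
lemma lemA {p : ℕ} {P : Type*} [Group P] [Finite P] (hp : p.Prime) (hP : IsPGroup p P)
    (hcf : commutator P = frattini P) (hcard : Nat.card (commutator P) = p)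
    (hZ : Subgroup.center P = commutator P ∨
      (IsCyclic ↥(Subgroup.center P) ∧ Nat.card ↥(Subgroup.center P) = p ^ 2))
    (Y₀ Y : Subgroup P)
    (hY₀ : Y₀ ⊓ Subgroup.center P = ⊥) (hY : Y ⊓ Subgroup.center P = ⊥) :
    ∃ x : P, Y₀ ⊓ (Y ⊔ Subgroup.center P) ≤ Y.map (MulAut.conj x).toMonoidHom := by
  classical
  haveI : (commutator P).Normal := by rw [_root_.commutator_def]; infer_instance
  have hCle : commutator P ≤ Subgroup.center P := aux_central hp hP (commutator P) hcard
  have hcen : ∀ c ∈ commutator P, ∀ g : P, g * c = c * g := fun c hc =>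
    Subgroup.mem_center_iff.mp (hCle hc)
  have hppow : ∀ g : P, g ^ p ∈ commutator P := fun g => by
    rw [hcf]; exact aux_pow hp hP g
  -- elements of the center of order dividing p lie in the commutator subgroup
  have hzC : ∀ z ∈ Subgroup.center P, z ^ p = 1 → z ∈ commutator P := by
    rcases hZ with hZ1 | ⟨hcyc, hc2⟩
    · intro z hz _; rwa [← hZ1]
    · -- center cyclic of order p²
      intro z hz hzp
      set O : Subgroup P :=
        { carrier := {x | x ∈ Subgroup.center P ∧ x ^ p = 1}
          one_mem' := ⟨Subgroup.one_mem _, one_pow p⟩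
          mul_mem' := by
            rintro a b ⟨ha, ha'⟩ ⟨hb, hb'⟩
            refine ⟨Subgroup.mul_mem _ ha hb, ?_⟩
            have hab : Commute a b := (Subgroup.mem_center_iff.mp ha b).symm
            rw [hab.mul_pow, ha', hb', one_mul]
          inv_mem' := by
            rintro a ⟨ha, ha'⟩
            exact ⟨Subgroup.inv_mem _ ha, by rw [inv_pow, ha', inv_one]⟩ } with hO
      have hCO : commutator P ≤ O := by
        intro c hc
        refine ⟨hCle hc, ?_⟩
        have hdvd : orderOf ((⟨c, hc⟩ : ↥(commutator P)) : P) ∣ p := by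
          rw [Subgroup.orderOf_coe, ← hcard]; exact orderOf_dvd_natCard _
        have hdvd' : orderOf c ∣ p := hdvd
        exact orderOf_dvd_iff_pow_eq_one.mp hdvd'
      have hOcard : Nat.card ↥O ≤ p := by
        haveI := Fintype.ofFinite ↥(Subgroup.center P)
        haveI : IsCyclic ↥(Subgroup.center P) := hcyc
        have hfil := IsCyclic.card_pow_eq_one_le
          (α := ↥(Subgroup.center P)) (n := p) hp.pos
        have hinj : Function.Injective
            (fun x : ↥O => (⟨⟨(x : P), x.2.1⟩, by
              rw [Finset.mem_filter]
              refine ⟨Finset.mem_univ _, ?_⟩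
              apply Subtype.ext
              push_cast
              exact x.2.2⟩ :
              ↥(Finset.filter (fun a : ↥(Subgroup.center P) => a ^ p = 1) Finset.univ))) := by
          intro a b hab
          apply Subtype.ext
          exact congrArg
            (fun u : ↥(Finset.filter (fun a : ↥(Subgroup.center P) => a ^ p = 1)
              Finset.univ) => ((u : ↥(Subgroup.center P)) : P)) hab
        have h1 : Nat.card ↥O ≤ Nat.card
            ↥(Finset.filter (fun a : ↥(Subgroup.center P) => a ^ p = 1) Finset.univ) :=
          Nat.card_le_card_of_injective _ hinj
        have h2 : Nat.card
            ↥(Finset.filter (fun a : ↥(Subgroup.center P) => a ^ p = 1) Finset.univ) =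
            (Finset.filter (fun a : ↥(Subgroup.center P) => a ^ p = 1) Finset.univ).card := by
          rw [Nat.card_eq_fintype_card, Fintype.card_coe]
        rw [h2] at h1
        exact le_trans h1 hfil
      have hEq : commutator P = O :=
        Subgroup.eq_of_le_of_card_ge hCO (le_trans hOcard (le_of_eq hcard.symm))
      rw [hEq]
      exact ⟨hz, hzp⟩
  set D : Subgroup P := Y₀ ⊓ (Y ⊔ Subgroup.center P) with hD
  have hDcen : D ⊓ Subgroup.center P = ⊥ := by
    rw [eq_bot_iff, ← hY₀]
    exact inf_le_inf_right _ inf_le_left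
  -- decomposition of elements of D
  have hdec : ∀ d : ↥D, ∃ yc : P × P,
      yc.1 ∈ Y ∧ yc.2 ∈ commutator P ∧ (d : P) = yc.1 * yc.2 := by
    intro d
    have hd1 : (d : P) ∈ Y₀ := d.2.1
    have hd2 : (d : P) ∈ Y ⊔ Subgroup.center P := d.2.2
    have hset : (d : P) ∈ ((Y : Set P) * (Subgroup.center P : Set P)) := by
      rw [← Subgroup.mul_normal]; exact hd2
    obtain ⟨y, hy, z, hz, hyz⟩ := Set.mem_mul.mp hset
    have hyp : y ^ p = 1 := by
      have h1 : y ^ p ∈ Y ⊓ Subgroup.center P :=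
        ⟨pow_mem hy p, hCle (hppow y)⟩
      rw [hY, Subgroup.mem_bot] at h1
      exact h1
    have hdp : (d : P) ^ p = 1 := by
      have h1 : (d : P) ^ p ∈ Y₀ ⊓ Subgroup.center P :=
        ⟨pow_mem hd1 p, hCle (hppow _)⟩
      rw [hY₀, Subgroup.mem_bot] at h1
      exact h1
    have hcomm : Commute y z := Subgroup.mem_center_iff.mp hz y
    have hzp : z ^ p = 1 := by
      have h1 : (y * z) ^ p = y ^ p * z ^ p := hcomm.mul_pow p
      rw [hyz] at h1
      rw [hdp] at h1
      rw [hyp, one_mul] at h1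
      exact h1.symm
    exact ⟨(y, z), hy, hzC z hz hzp, hyz.symm⟩
  set yF : ↥D → P := fun d => (hdec d).choose.1 with hyFdef
  set cF : ↥D → P := fun d => (hdec d).choose.2 with hcFdef
  have hyF : ∀ d : ↥D, yF d ∈ Y := fun d => (hdec d).choose_spec.1
  have hcF : ∀ d : ↥D, cF d ∈ commutator P := fun d => (hdec d).choose_spec.2.1
  have hdF : ∀ d : ↥D, (d : P) = yF d * cF d := fun d => (hdec d).choose_spec.2.2
  have huniq : ∀ {y c y' c' : P}, y ∈ Y → c ∈ commutator P → y' ∈ Y →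
      c' ∈ commutator P → y * c = y' * c' → y = y' ∧ c = c' := by
    intro y c y' c' hy hc hy' hc' h
    have h1 : y'⁻¹ * y = c' * c⁻¹ := by
      calc y'⁻¹ * y = y'⁻¹ * ((y * c) * c⁻¹) := by group
      _ = y'⁻¹ * ((y' * c') * c⁻¹) := by rw [h]
      _ = c' * c⁻¹ := by group
    have h2 : y'⁻¹ * y ∈ Y ⊓ Subgroup.center P := by
      constructor
      · exact Subgroup.mul_mem _ (Subgroup.inv_mem _ hy') hy
      · rw [h1]
        exact hCle (Subgroup.mul_mem _ hc' (Subgroup.inv_mem _ hc))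
    rw [hY, Subgroup.mem_bot] at h2
    have hyy : y = y' := by
      have : y' * (y'⁻¹ * y) = y' * 1 := by rw [h2]
      rw [mul_one] at this
      rw [← this]; group
    refine ⟨hyy, ?_⟩
    rw [h2] at h1
    have : c' * c⁻¹ = 1 := h1.symm
    have h3 : c' * c⁻¹ * c = 1 * c := by rw [this]
    rw [one_mul] at h3
    rw [← h3]; group
  let F : ↥D →* P :=
    { toFun := fun d => (cF d)⁻¹
      map_one' := by
        show (cF 1)⁻¹ = 1
        have h1 : (1 : P) = yF 1 * cF 1 := hdF 1
        obtain ⟨_, hc1⟩ := huniq (hyF 1) (hcF 1) (Subgroup.one_mem Y)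
          (Subgroup.one_mem _) (by rw [← h1]; simp)
        rw [hc1]; simp
      map_mul' := by
        intro d1 d2
        show (cF (d1 * d2))⁻¹ = (cF d1)⁻¹ * (cF d2)⁻¹
        have hcc : ∀ g : P, g * cF d1 = cF d1 * g := fun g => hcen _ (hcF d1) g
        have e : yF (d1 * d2) * cF (d1 * d2) = (yF d1 * yF d2) * (cF d1 * cF d2) := by
          rw [← hdF (d1 * d2), Subgroup.coe_mul, hdF d1, hdF d2]
          calc (yF d1 * cF d1) * (yF d2 * cF d2)
              = yF d1 * (cF d1 * yF d2) * cF d2 := by group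
            _ = yF d1 * (yF d2 * cF d1) * cF d2 := by rw [← hcc (yF d2)]
            _ = (yF d1 * yF d2) * (cF d1 * cF d2) := by group
        obtain ⟨_, hc⟩ := huniq (hyF _) (hcF _)
          (Subgroup.mul_mem _ (hyF d1) (hyF d2))
          (Subgroup.mul_mem _ (hcF d1) (hcF d2)) e
        rw [hc, mul_inv_rev]
        exact hcen _ (Subgroup.inv_mem _ (hcF d1)) ((cF d2)⁻¹) }
  have hFmem : ∀ d, F d ∈ commutator P := fun d => Subgroup.inv_mem _ (hcF d)
  obtain ⟨x, hx⟩ := aux_key hp hCle hcard D hDcen F hFmem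
  refine ⟨x⁻¹, ?_⟩
  intro d hd
  set d' : ↥D := ⟨d, hd⟩ with hd'
  rw [Subgroup.mem_map]
  refine ⟨yF d', hyF d', ?_⟩
  have h5 : ⁅x, d⁆ = (cF d')⁻¹ := hx d'
  have h6 : x * d * x⁻¹ = (cF d')⁻¹ * d := by
    have : x * d * x⁻¹ = ⁅x, d⁆ * d := by group
    rw [this, h5]
  have h7 : (cF d')⁻¹ * d = yF d' := by
    have hdd : d = yF d' * cF d' := hdF d'
    calc (cF d')⁻¹ * d = (cF d')⁻¹ * (yF d' * cF d') := by rw [← hdd]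
    _ = (cF d')⁻¹ * (cF d' * yF d') := by rw [hcen _ (hcF d') (yF d')]
    _ = yF d' := by group
  show (MulAut.conj x⁻¹).toMonoidHom (yF d') = d
  have h8 : (MulAut.conj x⁻¹).toMonoidHom (yF d') = x⁻¹ * yF d' * x := by
    simp [MulAut.conj_apply]
  rw [h8, ← h7, ← h6]
  group

/-- Let `P` be an (almost) extra-special `p`-group with center `Z`, and `Y₀, Y` subgroups
intersecting `Z` trivially, with `Y` of maximal order among such. Then there is `x ∈ P` with
`Y₀ ∩ YZ ≤ Y^x`; in particular if `Y₀` is also of maximal order then `Y₀` and `Y` are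
linked: there are `x, y ∈ P` with `Y₀^x ∩ YZ ≤ Y` and `Y^y ∩ Y₀Z ≤ Y₀`. -/
theorem stmt19 (p : ℕ) (hp : p.Prime) (P : Type*) [Group P] [Finite P]
    (hP : IsPGroup p P)
    (hcf : commutator P = frattini P) (hcard : Nat.card (commutator P) = p)
    (hZ : Subgroup.center P = commutator P ∨
      (IsCyclic (Subgroup.center P) ∧ Nat.card (Subgroup.center P) = p ^ 2))
    (Y₀ Y : Subgroup P)
    (hY₀ : Y₀ ⊓ Subgroup.center P = ⊥) (hY : Y ⊓ Subgroup.center P = ⊥)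
    (hmax : ∀ Y' : Subgroup P, Y' ⊓ Subgroup.center P = ⊥ → Nat.card Y' ≤ Nat.card Y) :
    (∃ x : P, Y₀ ⊓ (Y ⊔ Subgroup.center P) ≤ Y.map (MulAut.conj x).toMonoidHom) ∧
    ((∀ Y' : Subgroup P, Y' ⊓ Subgroup.center P = ⊥ → Nat.card Y' ≤ Nat.card Y₀) →
      ∃ x y : P,
        (Y₀.map (MulAut.conj x).toMonoidHom) ⊓ (Y ⊔ Subgroup.center P) ≤ Y ∧
        (Y.map (MulAut.conj y).toMonoidHom) ⊓ (Y₀ ⊔ Subgroup.center P) ≤ Y₀) := by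
  haveI : (commutator P).Normal := by rw [_root_.commutator_def]; infer_instance
  have hCle : commutator P ≤ Subgroup.center P := aux_central hp hP (commutator P) hcard
  constructor
  · exact lemA hp hP hcf hcard hZ Y₀ Y hY₀ hY
  · intro _
    obtain ⟨x, hx⟩ := lemA hp hP hcf hcard hZ Y₀ Y hY₀ hY
    obtain ⟨y, hy⟩ := lemA hp hP hcf hcard hZ Y Y₀ hY hY₀
    refine ⟨x⁻¹, y⁻¹, ?_, ?_⟩
    · intro a ha
      obtain ⟨ha1, ha2⟩ := Subgroup.mem_inf.mp ha
      rw [Subgroup.mem_map] at ha1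
      obtain ⟨b, hb, hba⟩ := ha1
      have hba' : x⁻¹ * b * x = a := by
        have h0 : (MulAut.conj x⁻¹).toMonoidHom b = x⁻¹ * b * x := by
          simp [MulAut.conj_apply]
        rw [← h0]; exact hba
      have hbYZ : b ∈ Y ⊔ Subgroup.center P := by
        have h1 : x * a * x⁻¹ ∈ Y ⊔ Subgroup.center P := aux_conj (p := p) hCle Y x a ha2
        have h2 : x * a * x⁻¹ = b := by rw [← hba']; group
        rwa [h2] at h1
      have hbD : b ∈ Y₀ ⊓ (Y ⊔ Subgroup.center P) := ⟨hb, hbYZ⟩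
      have h3 := hx hbD
      rw [Subgroup.mem_map] at h3
      obtain ⟨c, hc, hcb⟩ := h3
      have hcb' : x * c * x⁻¹ = b := by
        have h0 : (MulAut.conj x).toMonoidHom c = x * c * x⁻¹ := by
          simp [MulAut.conj_apply]
        rw [← h0]; exact hcb
      have h4 : a = c := by rw [← hba', ← hcb']; group
      rw [h4]; exact hc
    · intro a ha
      obtain ⟨ha1, ha2⟩ := Subgroup.mem_inf.mp ha
      rw [Subgroup.mem_map] at ha1
      obtain ⟨b, hb, hba⟩ := ha1
      have hba' : y⁻¹ * b * y = a := by
        have h0 : (MulAut.conj y⁻¹).toMonoidHom b = y⁻¹ * b * y := by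
          simp [MulAut.conj_apply]
        rw [← h0]; exact hba
      have hbYZ : b ∈ Y₀ ⊔ Subgroup.center P := by
        have h1 : y * a * y⁻¹ ∈ Y₀ ⊔ Subgroup.center P := aux_conj (p := p) hCle Y₀ y a ha2
        have h2 : y * a * y⁻¹ = b := by rw [← hba']; group
        rwa [h2] at h1
      have hbD : b ∈ Y ⊓ (Y₀ ⊔ Subgroup.center P) := ⟨hb, hbYZ⟩
      have h3 := hy hbD
      rw [Subgroup.mem_map] at h3
      obtain ⟨c, hc, hcb⟩ := h3
      have hcb' : y * c * y⁻¹ = b := by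
        have h0 : (MulAut.conj y).toMonoidHom c = y * c * y⁻¹ := by
          simp [MulAut.conj_apply]
        rw [← h0]; exact hcb
      have h4 : a = c := by rw [← hba', ← hcb']; group
      rw [h4]; exact hc
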